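/- Let Φ(t) = log(1+t) on ℂⁿ (Fubini–Study potential in affine coordinates) with metric g, and let λ be its Einstein constant (Σ_h ∂²g^{i\bar j}/∂z_h∂\bar z_h(0) = λδ^{ij}). Then Δ³(|z₁|⁴)(0) = 12λ + 16, where Δ is the Kähler Laplacian of g. -/

import Mathlib

set_option maxHeartbeats 1000000

/-- The Wirtinger derivative `∂/∂z_i` of a function on `ℂⁿ`. -/
noncomputable def dz {n : ℕ} (i : Fin n) (f : (Fin n → ℂ) → ℂ) : (Fin n → ℂ) → ℂ :=
  fun z => (fderiv ℝ f z (Pi.single i 1) - Complex.I * fderiv ℝ f z (Pi.single i Complex.I)) / 2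

/-- The Wirtinger derivative `∂/∂\bar z_i` of a function on `ℂⁿ`. -/
noncomputable def dzbar {n : ℕ} (i : Fin n) (f : (Fin n → ℂ) → ℂ) : (Fin n → ℂ) → ℂ :=
  fun z => (fderiv ℝ f z (Pi.single i 1) + Complex.I * fderiv ℝ f z (Pi.single i Complex.I)) / 2

/-- The complex Euclidean Laplacian `Δ_c = ∑ i, ∂²/(∂z_i ∂\bar z_i)`. -/
noncomputable def lapC {n : ℕ} (f : (Fin n → ℂ) → ℂ) : (Fin n → ℂ) → ℂ :=
  fun z => ∑ i, dzbar i (dz i f) z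

/-- The inverse of the Fubini–Study metric in affine coordinates:
`g^{i \bar j} = (1 + |z|²)(δ_{ij} + z_j \bar z_i)`. -/
noncomputable def ginvFS {n : ℕ} (z : Fin n → ℂ) (i j : Fin n) : ℂ :=
  ((1 + ∑ k, Complex.normSq (z k) : ℝ) : ℂ) *
    ((if i = j then 1 else 0) + z j * starRingEnd ℂ (z i))

/-- The Kähler Laplacian `Δ = ∑ g^{i \bar j} ∂²/(∂z_j ∂\bar z_i)` of the Fubini–Study
metric on `ℂⁿ` with potential `log(1 + |z|²)`. -/
noncomputable def kLapFS {n : ℕ} (f : (Fin n → ℂ) → ℂ) : (Fin n → ℂ) → ℂ :=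
  fun z => ∑ i, ∑ j, ginvFS z i j * dzbar i (dz j f) z

namespace KFS
open Complex
variable {n : ℕ}

inductive XP (n : ℕ) : Type where
  | Cst : ℂ → XP n
  | Z : Fin n → XP n
  | Zb : Fin n → XP n
  | S : XP n
  | add : XP n → XP n → XP n
  | mul : XP n → XP n → XP n

noncomputable def evx : XP n → (Fin n → ℂ) → ℂ
  | .Cst c, _ => c
  | .Z k, z => z k
  | .Zb k, z => starRingEnd ℂ (z k)
  | .S, z => ∑ x, z x * starRingEnd ℂ (z x)
  | .add a b, z => evx a z + evx b z
  | .mul a b, z => evx a z * evx b z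

def DZ (i : Fin n) : XP n → XP n
  | .Cst _ => .Cst 0
  | .Z k => .Cst (if i = k then 1 else 0)
  | .Zb _ => .Cst 0
  | .S => .Zb i
  | .add a b => .add (DZ i a) (DZ i b)
  | .mul a b => .add (.mul (DZ i a) b) (.mul a (DZ i b))

def DZb (i : Fin n) : XP n → XP n
  | .Cst _ => .Cst 0
  | .Z _ => .Cst 0
  | .Zb k => .Cst (if i = k then 1 else 0)
  | .S => .Z i
  | .add a b => .add (DZb i a) (DZb i b)
  | .mul a b => .add (.mul (DZb i a) b) (.mul a (DZb i b))

noncomputable def pj (k : Fin n) : (Fin n → ℂ) →L[ℝ] ℂ := ContinuousLinearMap.proj k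

noncomputable def cj : ℂ →L[ℝ] ℂ := (Complex.conjCLE : ℂ ≃L[ℝ] ℂ)

lemma evx_Z_eq (k : Fin n) : evx (XP.Z k) = ⇑(pj k) := by funext z; simp [evx, pj]

lemma evx_Zb_eq (k : Fin n) : evx (XP.Zb k) = ⇑(cj.comp (pj k)) := by
  funext z; simp [evx, pj, cj]

lemma evx_diff (e : XP n) : Differentiable ℝ (evx e) := by
  induction e with
  | Cst c => exact differentiable_const c
  | Z k => rw [evx_Z_eq]; exact (pj k).differentiable
  | Zb k => rw [evx_Zb_eq]; exact (cj.comp (pj k)).differentiable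
  | S =>
      show Differentiable ℝ (fun z : Fin n → ℂ => ∑ x, z x * starRingEnd ℂ (z x))
      refine Differentiable.fun_sum (fun x _ => Differentiable.mul ?_ ?_)
      · exact (pj x).differentiable
      · have := (cj.comp (pj x)).differentiable
        rwa [show ⇑(cj.comp (pj x)) = fun z : Fin n → ℂ => starRingEnd ℂ (z x) from
          funext fun w => by simp [cj, pj]] at this
  | add a b iha ihb => exact iha.add ihb
  | mul a b iha ihb => exact iha.mul ihb

lemma dz_hasF {f : (Fin n → ℂ) → ℂ} {L : (Fin n → ℂ) →L[ℝ] ℂ} {z} (i : Fin n)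
    (h : HasFDerivAt f L z) :
    dz i f z = (L (Pi.single i 1) - Complex.I * L (Pi.single i Complex.I)) / 2 := by
  simp [dz, h.fderiv]

lemma dzbar_hasF {f : (Fin n → ℂ) → ℂ} {L : (Fin n → ℂ) →L[ℝ] ℂ} {z} (i : Fin n)
    (h : HasFDerivAt f L z) :
    dzbar i f z = (L (Pi.single i 1) + Complex.I * L (Pi.single i Complex.I)) / 2 := by
  simp [dzbar, h.fderiv]

lemma S_hasF (z : Fin n → ℂ) :
    HasFDerivAt (evx (XP.S : XP n))
      (∑ x, ((z x) • (cj.comp (pj x)) + (starRingEnd ℂ (z x)) • (pj x))) z := by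
  show HasFDerivAt (fun z : Fin n → ℂ => ∑ x, z x * starRingEnd ℂ (z x)) _ _
  refine HasFDerivAt.fun_sum (fun x _ => ?_)
  have h1 : HasFDerivAt (fun z : Fin n → ℂ => z x) (pj x) z := (pj x).hasFDerivAt
  have h2 : HasFDerivAt (fun z : Fin n → ℂ => starRingEnd ℂ (z x)) (cj.comp (pj x)) z := by
    have h := (cj.comp (pj x)).hasFDerivAt (x := z)
    have he : ⇑(cj.comp (pj x)) = fun z : Fin n → ℂ => starRingEnd ℂ (z x) := by
      funext w; simp [cj, pj]
    rwa [he] at h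
  exact h1.mul h2

lemma dz_evx (e : XP n) (i : Fin n) : dz i (evx e) = evx (DZ i e) := by
  induction e with
  | Cst c =>
      funext z
      rw [show evx (XP.Cst c : XP n) = fun _ => c from rfl]
      simp [dz, DZ, evx]
  | Z k =>
      funext z
      rw [evx_Z_eq, dz_hasF i (pj k).hasFDerivAt]
      simp only [pj, ContinuousLinearMap.proj_apply, Pi.single_apply, DZ, evx]
      by_cases h : k = i
      · subst h; norm_num [Complex.I_mul_I]
      · simp [h, Ne.symm h]
  | Zb k =>
      funext z
      rw [evx_Zb_eq, dz_hasF i (cj.comp (pj k)).hasFDerivAt]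
      simp only [pj, cj, ContinuousLinearMap.comp_apply, ContinuousLinearMap.proj_apply,
        Pi.single_apply, DZ, evx, ContinuousLinearEquiv.coe_coe, Complex.conjCLE_apply]
      by_cases h : k = i
      · subst h; simp [Complex.conj_I]
      · simp [h]
  | S =>
      funext z
      rw [dz_hasF i (S_hasF z)]
      simp only [pj, cj, ContinuousLinearMap.sum_apply, ContinuousLinearMap.add_apply,
        ContinuousLinearMap.smul_apply, ContinuousLinearMap.comp_apply,
        ContinuousLinearMap.proj_apply, ContinuousLinearEquiv.coe_coe, Complex.conjCLE_apply,
        Pi.single_apply, smul_eq_mul, apply_ite (starRingEnd ℂ), map_zero, Complex.conj_I,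
        mul_ite, ite_mul, mul_zero, zero_mul, Finset.sum_add_distrib, Finset.sum_ite_eq',
        Finset.mem_univ, if_true, DZ, evx, map_one, mul_one]
      linear_combination ((z i - starRingEnd ℂ (z i))/2) * Complex.I_mul_I
  | add a b iha ihb =>
      funext z
      have ha := (evx_diff a).differentiableAt (x := z)
      have hb := (evx_diff b).differentiableAt (x := z)
      have : evx (XP.add a b) = fun z => evx a z + evx b z := rfl
      rw [this]
      have hfd : fderiv ℝ (fun z => evx a z + evx b z) z
          = fderiv ℝ (evx a) z + fderiv ℝ (evx b) z := fderiv_add ha hb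
      have h1 := congrFun (iha) z
      have h2 := congrFun (ihb) z
      simp only [dz, hfd, ContinuousLinearMap.add_apply] at h1 h2 ⊢
      show _ = evx (DZ i (XP.add a b)) z
      simp only [DZ, evx]
      rw [← h1, ← h2]
      ring
  | mul a b iha ihb =>
      funext z
      have ha := (evx_diff a).differentiableAt (x := z)
      have hb := (evx_diff b).differentiableAt (x := z)
      have : evx (XP.mul a b) = fun z => evx a z * evx b z := rfl
      rw [this]
      have hfd : fderiv ℝ (fun z => evx a z * evx b z) z
          = evx a z • fderiv ℝ (evx b) z + evx b z • fderiv ℝ (evx a) z := fderiv_mul ha hb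
      have h1 := congrFun (iha) z
      have h2 := congrFun (ihb) z
      simp only [dz, hfd, ContinuousLinearMap.add_apply, ContinuousLinearMap.smul_apply,
        smul_eq_mul] at h1 h2 ⊢
      show _ = evx (DZ i (XP.mul a b)) z
      simp only [DZ, evx]
      rw [← h1, ← h2]
      ring

lemma dzbar_evx (e : XP n) (i : Fin n) : dzbar i (evx e) = evx (DZb i e) := by
  induction e with
  | Cst c =>
      funext z
      rw [show evx (XP.Cst c : XP n) = fun _ => c from rfl]
      simp [dzbar, DZb, evx]
  | Z k =>
      funext z
      rw [evx_Z_eq, dzbar_hasF i (pj k).hasFDerivAt]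
      simp only [pj, ContinuousLinearMap.proj_apply, Pi.single_apply, DZb, evx]
      by_cases h : k = i
      · subst h; norm_num [Complex.I_mul_I]
      · simp [h]
  | Zb k =>
      funext z
      rw [evx_Zb_eq, dzbar_hasF i (cj.comp (pj k)).hasFDerivAt]
      simp only [pj, cj, ContinuousLinearMap.comp_apply, ContinuousLinearMap.proj_apply,
        Pi.single_apply, DZb, evx, ContinuousLinearEquiv.coe_coe, Complex.conjCLE_apply]
      by_cases h : k = i
      · subst h; norm_num [Complex.conj_I]
      · simp [h, Ne.symm h]
  | S =>
      funext z
      rw [dzbar_hasF i (S_hasF z)]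
      simp only [pj, cj, ContinuousLinearMap.sum_apply, ContinuousLinearMap.add_apply,
        ContinuousLinearMap.smul_apply, ContinuousLinearMap.comp_apply,
        ContinuousLinearMap.proj_apply, ContinuousLinearEquiv.coe_coe, Complex.conjCLE_apply,
        Pi.single_apply, smul_eq_mul, apply_ite (starRingEnd ℂ), map_zero, Complex.conj_I,
        mul_ite, ite_mul, mul_zero, zero_mul, Finset.sum_add_distrib, Finset.sum_ite_eq',
        Finset.mem_univ, if_true, DZb, evx, map_one, mul_one]
      linear_combination ((starRingEnd ℂ (z i) - z i)/2) * Complex.I_mul_I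
  | add a b iha ihb =>
      funext z
      have ha := (evx_diff a).differentiableAt (x := z)
      have hb := (evx_diff b).differentiableAt (x := z)
      have : evx (XP.add a b) = fun z => evx a z + evx b z := rfl
      rw [this]
      have hfd : fderiv ℝ (fun z => evx a z + evx b z) z
          = fderiv ℝ (evx a) z + fderiv ℝ (evx b) z := fderiv_add ha hb
      have h1 := congrFun (iha) z
      have h2 := congrFun (ihb) z
      simp only [dzbar, hfd, ContinuousLinearMap.add_apply] at h1 h2 ⊢
      show _ = evx (DZb i (XP.add a b)) z
      simp only [DZb, evx]
      rw [← h1, ← h2]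
      ring
  | mul a b iha ihb =>
      funext z
      have ha := (evx_diff a).differentiableAt (x := z)
      have hb := (evx_diff b).differentiableAt (x := z)
      have : evx (XP.mul a b) = fun z => evx a z * evx b z := rfl
      rw [this]
      have hfd : fderiv ℝ (fun z => evx a z * evx b z) z
          = evx a z • fderiv ℝ (evx b) z + evx b z • fderiv ℝ (evx a) z := fderiv_mul ha hb
      have h1 := congrFun (iha) z
      have h2 := congrFun (ihb) z
      simp only [dzbar, hfd, ContinuousLinearMap.add_apply, ContinuousLinearMap.smul_apply,
        smul_eq_mul] at h1 h2 ⊢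
      show _ = evx (DZb i (XP.mul a b)) z
      simp only [DZb, evx]
      rw [← h1, ← h2]
      ring


noncomputable def Gx (i j : Fin n) : XP n :=
  .mul (.add (.Cst 1) .S) (.add (.Cst (if i = j then 1 else 0)) (.mul (.Z j) (.Zb i)))

lemma ginv_ev (z : Fin n → ℂ) (i j : Fin n) : ginvFS z i j = evx (Gx i j) z := by
  simp only [ginvFS, Gx, evx, Complex.mul_conj]
  push_cast
  ring

lemma kLap_evx (e : XP n) :
    kLapFS (evx e) = fun z => ∑ i, ∑ j, evx (Gx i j) z * evx (DZb i (DZ j e)) z := by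
  funext z
  simp only [kLapFS, dz_evx, dzbar_evx]
  exact Finset.sum_congr rfl fun i _ => Finset.sum_congr rfl fun j _ => by rw [ginv_ev]

noncomputable def e0x (a : Fin n) : XP n :=
  .mul (.mul (.Z a) (.Zb a)) (.mul (.Z a) (.Zb a))

noncomputable def e1x (a : Fin n) : XP n := (.mul (.mul (.mul (.Cst (4)) (.add (.Cst (1)) (.S))) (.add (.Cst (1)) (.mul (.Z a) (.Zb a)))) (.mul (.Z a) (.Zb a)))

noncomputable def e2x (a : Fin n) : XP n := (.add (.add (.add (.add (.add (.add (.add (.add (.mul (.Cst (4)) (.mul (.Cst (1)) (.Cst (1)))) (.mul (.Cst (8)) (.mul (.Cst (1)) (.mul (.Cst (1)) (.S))))) (.mul (.Cst (4)) (.mul (.Cst (1)) (.mul (.mul (.Cst (1)) (.S)) (.S))))) (.mul (.Cst (28+(4*(n:ℂ)))) (.mul (.mul (.Cst (1)) (.mul (.Z a) (.Zb a))) (.Cst (1))))) (.mul (.Cst (60+(4*(n:ℂ)))) (.mul (.mul (.Cst (1)) (.mul (.Z a) (.Zb a))) (.mul (.Cst (1)) (.S))))) (.mul (.Cst (32)) (.mul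 (.mul (.Cst (1)) (.mul (.Z a) (.Zb a))) (.mul (.mul (.Cst (1)) (.S)) (.S))))) (.mul (.Cst (32+(4*(n:ℂ)))) (.mul (.mul (.mul (.Cst (1)) (.mul (.Z a) (.Zb a))) (.mul (.Z a) (.Zb a))) (.Cst (1))))) (.mul (.Cst (68+(4*(n:ℂ)))) (.mul (.mul (.mul (.Cst (1)) (.mul (.Z a) (.Zb a))) (.mul (.Z a) (.Zb a))) (.mul (.Cst (1)) (.S))))) (.mul (.Cst (36)) (.mul (.mul (.mul (.Cst (1)) (.mul (.Z a) (.Zb a))) (.mul (.Z a) (.Zb a))) (.mul (.mul (.Cst (1)) (.S)) (.S)))))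

lemma stage1 (a : Fin n) : kLapFS (evx (e0x a)) = evx (e1x a) := by
  funext z
  rw [kLap_evx]; beta_reduce
  have key : ∀ i j : Fin n, evx (Gx i j) z * evx (DZb i (DZ j (e0x a))) z =
      (if j = a then (if i = a then (4)*(∑ x, z x * starRingEnd ℂ (z x))*z a*starRingEnd ℂ (z a)*starRingEnd ℂ (z i)*z j else 0) else 0)
      + (if i = j then (if j = a then (if i = a then (4)*(∑ x, z x * starRingEnd ℂ (z x))*z a*starRingEnd ℂ (z a) else 0) else 0) else 0)
      + (if j = a then (if i = a then (4)*z a*starRingEnd ℂ (z a)*starRingEnd ℂ (z i)*z j else 0) else 0)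
      + (if i = j then (if j = a then (if i = a then (4)*z a*starRingEnd ℂ (z a) else 0) else 0) else 0) := by
    intro i j
    simp only [Gx, e0x, DZ, DZb, evx]
    split_ifs <;> ring
  rw [Finset.sum_congr rfl fun i _ => Finset.sum_congr rfl fun j _ => key i j]
  simp only [Finset.sum_add_distrib, Finset.sum_ite_irrel, Finset.sum_ite_eq,
    Finset.sum_ite_eq', Finset.mem_univ, if_true, ← Finset.mul_sum, Finset.sum_const,
    Finset.card_univ, Fintype.card_fin, nsmul_eq_mul, Finset.sum_const_zero, mul_zero, zero_mul, add_zero, zero_add,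
    e1x, evx]
  ring

lemma stage2 (a : Fin n) : kLapFS (evx (e1x a)) = evx (e2x a) := by
  funext z
  rw [kLap_evx]; beta_reduce
  have key : ∀ i j : Fin n, evx (Gx i j) z * evx (DZb i (DZ j (e1x a))) z =
      (if i = j then (if j = a then (if i = a then (4)*(∑ x, z x * starRingEnd ℂ (z x))*(∑ x, z x * starRingEnd ℂ (z x)) else 0) else 0) else 0)
      + (if j = a then (if i = a then (16)*(∑ x, z x * starRingEnd ℂ (z x))*(∑ x, z x * starRingEnd ℂ (z x))*z a*starRingEnd ℂ (z a)*starRingEnd ℂ (z i)*z j else 0) else 0)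
      + (if i = j then (if j = a then (if i = a then (16)*(∑ x, z x * starRingEnd ℂ (z x))*(∑ x, z x * starRingEnd ℂ (z x))*z a*starRingEnd ℂ (z a) else 0) else 0) else 0)
      + (if j = a then (if i = a then (4)*(∑ x, z x * starRingEnd ℂ (z x))*(∑ x, z x * starRingEnd ℂ (z x))*starRingEnd ℂ (z i)*z j else 0) else 0)
      + (if i = j then (4)*(∑ x, z x * starRingEnd ℂ (z x))*z a*z a*starRingEnd ℂ (z a)*starRingEnd ℂ (z a) * (z j * starRingEnd ℂ (z i)) else 0)
      + (if i = a then (8)*(∑ x, z x * starRingEnd ℂ (z x))*z a*z a*starRingEnd ℂ (z a)*starRingEnd ℂ (z i) * (z j * starRingEnd ℂ (z j)) else 0)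
      + (if i = j then (4)*(∑ x, z x * starRingEnd ℂ (z x))*z a*z a*starRingEnd ℂ (z a)*starRingEnd ℂ (z a) else 0)
      + (if i = j then (if i = a then (8)*(∑ x, z x * starRingEnd ℂ (z x))*z a*z a*starRingEnd ℂ (z a)*starRingEnd ℂ (z j) else 0) else 0)
      + (if j = a then (8)*(∑ x, z x * starRingEnd ℂ (z x))*z a*starRingEnd ℂ (z a)*starRingEnd ℂ (z a)*z j * (z i * starRingEnd ℂ (z i)) else 0)
      + (if i = j then (if j = a then (8)*(∑ x, z x * starRingEnd ℂ (z x))*z a*starRingEnd ℂ (z a)*starRingEnd ℂ (z a)*z i else 0) else 0)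
      + (if i = j then (4)*(∑ x, z x * starRingEnd ℂ (z x))*z a*starRingEnd ℂ (z a) * (z j * starRingEnd ℂ (z i)) else 0)
      + (if j = a then (if i = a then (32)*(∑ x, z x * starRingEnd ℂ (z x))*z a*starRingEnd ℂ (z a)*starRingEnd ℂ (z i)*z j else 0) else 0)
      + (if i = a then (4)*(∑ x, z x * starRingEnd ℂ (z x))*z a*starRingEnd ℂ (z i) * (z j * starRingEnd ℂ (z j)) else 0)
      + (if i = j then (4)*(∑ x, z x * starRingEnd ℂ (z x))*z a*starRingEnd ℂ (z a) else 0)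
      + (if i = j then (if j = a then (if i = a then (32)*(∑ x, z x * starRingEnd ℂ (z x))*z a*starRingEnd ℂ (z a) else 0) else 0) else 0)
      + (if i = j then (if i = a then (4)*(∑ x, z x * starRingEnd ℂ (z x))*z a*starRingEnd ℂ (z j) else 0) else 0)
      + (if j = a then (4)*(∑ x, z x * starRingEnd ℂ (z x))*starRingEnd ℂ (z a)*z j * (z i * starRingEnd ℂ (z i)) else 0)
      + (if i = j then (if j = a then (4)*(∑ x, z x * starRingEnd ℂ (z x))*starRingEnd ℂ (z a)*z i else 0) else 0)
      + (if j = a then (if i = a then (8)*(∑ x, z x * starRingEnd ℂ (z x))*starRingEnd ℂ (z i)*z j else 0) else 0)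
      + (if i = j then (if j = a then (if i = a then (8)*(∑ x, z x * starRingEnd ℂ (z x)) else 0) else 0) else 0)
      + (if i = j then (4)*z a*z a*starRingEnd ℂ (z a)*starRingEnd ℂ (z a) * (z j * starRingEnd ℂ (z i)) else 0)
      + (if i = a then (8)*z a*z a*starRingEnd ℂ (z a)*starRingEnd ℂ (z i) * (z j * starRingEnd ℂ (z j)) else 0)
      + (if i = j then (4)*z a*z a*starRingEnd ℂ (z a)*starRingEnd ℂ (z a) else 0)
      + (if i = j then (if i = a then (8)*z a*z a*starRingEnd ℂ (z a)*starRingEnd ℂ (z j) else 0) else 0)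
      + (if j = a then (8)*z a*starRingEnd ℂ (z a)*starRingEnd ℂ (z a)*z j * (z i * starRingEnd ℂ (z i)) else 0)
      + (if i = j then (if j = a then (8)*z a*starRingEnd ℂ (z a)*starRingEnd ℂ (z a)*z i else 0) else 0)
      + (if i = j then (4)*z a*starRingEnd ℂ (z a) * (z j * starRingEnd ℂ (z i)) else 0)
      + (if j = a then (if i = a then (16)*z a*starRingEnd ℂ (z a)*starRingEnd ℂ (z i)*z j else 0) else 0)
      + (if i = a then (4)*z a*starRingEnd ℂ (z i) * (z j * starRingEnd ℂ (z j)) else 0)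
      + (if i = j then (4)*z a*starRingEnd ℂ (z a) else 0)
      + (if i = j then (if j = a then (if i = a then (16)*z a*starRingEnd ℂ (z a) else 0) else 0) else 0)
      + (if i = j then (if i = a then (4)*z a*starRingEnd ℂ (z j) else 0) else 0)
      + (if j = a then (4)*starRingEnd ℂ (z a)*z j * (z i * starRingEnd ℂ (z i)) else 0)
      + (if i = j then (if j = a then (4)*starRingEnd ℂ (z a)*z i else 0) else 0)
      + (if j = a then (if i = a then (4)*starRingEnd ℂ (z i)*z j else 0) else 0)
      + (if i = j then (if j = a then (if i = a then (4) else 0) else 0) else 0) := by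
    intro i j
    simp only [Gx, e1x, DZ, DZb, evx]
    split_ifs <;> ring
  rw [Finset.sum_congr rfl fun i _ => Finset.sum_congr rfl fun j _ => key i j]
  simp only [Finset.sum_add_distrib, Finset.sum_ite_irrel, Finset.sum_ite_eq,
    Finset.sum_ite_eq', Finset.mem_univ, if_true, ← Finset.mul_sum, Finset.sum_const,
    Finset.card_univ, Fintype.card_fin, nsmul_eq_mul, Finset.sum_const_zero, mul_zero, zero_mul, add_zero, zero_add,
    e2x, evx]
  ring

lemma stage3 (a : Fin n) : kLapFS (evx (e2x a)) 0 = 12 * (n : ℂ) + 28 := by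
  rw [kLap_evx]; beta_reduce
  have key : ∀ i j : Fin n, evx (Gx i j) (0 : Fin n → ℂ) * evx (DZb i (DZ j (e2x a))) 0 =
      (if i = j then (8 : ℂ) else 0)
      + (if i = j then (if j = a then (if i = a then (28 + 4*(n:ℂ)) else 0) else 0) else 0) := by
    intro i j
    simp only [Gx, e2x, DZ, DZb, evx, Pi.zero_apply, map_zero, mul_zero, zero_mul,
      add_zero, zero_add, Finset.sum_const_zero]
    split_ifs <;> first | ring | simp_all
  rw [Finset.sum_congr rfl fun i _ => Finset.sum_congr rfl fun j _ => key i j]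
  simp only [Finset.sum_add_distrib, Finset.sum_ite_irrel, Finset.sum_ite_eq,
    Finset.sum_ite_eq', Finset.mem_univ, if_true, Finset.sum_const,
    Finset.card_univ, Fintype.card_fin, nsmul_eq_mul, Finset.sum_const_zero, mul_zero, zero_mul, add_zero, zero_add]
  ring

lemma lam_val (a : Fin n) (lam : ℂ)
    (hl : (∑ h, dz h (dzbar h (fun z => ginvFS z a a)) 0) = lam * (if a = a then 1 else 0)) :
    lam = (n : ℂ) + 1 := by
  have hfun : (fun z : Fin n → ℂ => ginvFS z a a) = evx (Gx a a) :=
    funext fun z => ginv_ev z a a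
  rw [hfun] at hl
  simp only [eq_self_iff_true, if_true, mul_one] at hl
  rw [← hl]
  have key : ∀ h : Fin n, dz h (dzbar h (evx (Gx a a))) (0 : Fin n → ℂ)
      = 1 + (if h = a then 1 else 0) := by
    intro h
    rw [dzbar_evx, dz_evx]
    simp only [Gx, DZ, DZb, evx, Pi.zero_apply, map_zero, mul_zero, zero_mul,
      add_zero, zero_add, Finset.sum_const_zero]
    split_ifs <;> first | ring | simp_all
  rw [Finset.sum_congr rfl fun h _ => key h]
  simp only [Finset.sum_add_distrib, Finset.sum_ite_eq', Finset.mem_univ, if_true,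
    Finset.sum_const, Finset.card_univ, Fintype.card_fin, nsmul_eq_mul]
  ring

end KFS

/-- for the Fubini–Study metric on `ℂⁿ` with Einstein constant `λ`
(normalized by `∑ₕ ∂²g^{i \bar j}/∂z_h∂\bar z_h(0) = λ δ^{ij}`), one has
`Δ³(|z₁|⁴)(0) = 12λ + 16`. -/
theorem kLapFS_cube_z1_fourth (n : ℕ) (hn : 0 < n) (lam : ℂ)
    (hlam : ∀ i j : Fin n,
      (∑ h, dz h (dzbar h (fun z => ginvFS z i j)) 0) = lam * (if i = j then 1 else 0)) :
    (kLapFS^[3] (fun z : Fin n → ℂ =>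
      (z ⟨0, hn⟩ * starRingEnd ℂ (z ⟨0, hn⟩)) ^ 2)) 0 = 12 * lam + 16 := by
  set a : Fin n := ⟨0, hn⟩
  have hf : (fun z : Fin n → ℂ => (z a * starRingEnd ℂ (z a)) ^ 2) = KFS.evx (KFS.e0x a) := by
    funext z
    simp only [KFS.evx, KFS.e0x]
    ring
  have hlamv : lam = (n : ℂ) + 1 := KFS.lam_val a lam (hlam a a)
  rw [hf, show (3 : ℕ) = 2 + 1 from rfl, Function.iterate_succ_apply,
    show (2 : ℕ) = 1 + 1 from rfl, Function.iterate_succ_apply, Function.iterate_one,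
    KFS.stage1, KFS.stage2, KFS.stage3, hlamv]
  ring
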